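/- Let K be a real 2×2 matrix with det K > 0, and let J_B be a complex structure on (ℝ², Δ). Then J_A = K J_B K⁻¹ is again a complex structure on (ℝ², Δ); in particular, every nondegenerate single-mode Gaussian channel with positive det K is gauge-covariant (K J_B − J_A K = 0 with J_A a complex structure). -/

import Mathlib

open Matrix

/-- The single-mode symplectic matrix `Δ = [[0,1],[-1,0]]`. -/
def Sympl1 : Matrix (Fin 2) (Fin 2) ℝ := !![0, 1; -1, 0]

/-- A real 2×2 matrix `J` is a complex structure with respect to `Δ` if
`J² = -I`, `ΔJ = -JᵀΔ`, and `ΔJ` is positive semidefinite. -/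
def IsComplexStructure1 (J : Matrix (Fin 2) (Fin 2) ℝ) : Prop :=
  J * J = -1 ∧ Sympl1 * J = -(Jᵀ * Sympl1) ∧ (Sympl1 * J).PosSemidef

lemma psd_smul_aux {n : ℕ} {c : ℝ} (hc : 0 ≤ c) {M : Matrix (Fin n) (Fin n) ℝ}
    (h : M.PosSemidef) : (c • M).PosSemidef := by
  rw [posSemidef_iff_dotProduct_mulVec] at h ⊢
  constructor
  · unfold Matrix.IsHermitian
    rw [conjTranspose_smul, h.1]
    simp
  · intro x
    have := h.2 x
    simp only [smul_mulVec, dotProduct_smul] at *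
    positivity

lemma symp_conj_aux (K : Matrix (Fin 2) (Fin 2) ℝ) :
    Kᵀ * Sympl1 * K = K.det • Sympl1 := by
  ext i j
  fin_cases i <;> fin_cases j <;>
    simp [Sympl1, Matrix.mul_apply, Fin.sum_univ_two, Matrix.det_fin_two] <;> ring

/-- If `K` is a real 2×2 matrix with `det K > 0` and `J_B` is a
complex structure on `(ℝ², Δ)`, then `J_A = K J_B K⁻¹` is again a complex structure
and `K J_B - J_A K = 0`; that is, every nondegenerate single-mode Gaussian channel
with positive `det K` is gauge-covariant. -/
theorem conj_complexStructure_of_det_pos (K J_B : Matrix (Fin 2) (Fin 2) ℝ)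
    (hK : 0 < K.det) (hJB : IsComplexStructure1 J_B) :
    IsComplexStructure1 (K * J_B * K⁻¹) ∧
    K * J_B - (K * J_B * K⁻¹) * K = 0 := by
  have hKd : IsUnit K.det := isUnit_iff_ne_zero.mpr hK.ne'
  have hKinv : K⁻¹ * K = 1 := nonsing_inv_mul K hKd
  have hKinv' : K * K⁻¹ = 1 := mul_nonsing_inv K hKd
  have hKTinv : (K⁻¹)ᵀ * Kᵀ = 1 := by
    rw [← transpose_mul, hKinv', transpose_one]
  -- key identity: Δ K = det K • (K⁻¹)ᵀ Δ
  have key : Sympl1 * K = K.det • ((K⁻¹)ᵀ * Sympl1) := by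
    calc Sympl1 * K = ((K⁻¹)ᵀ * Kᵀ) * Sympl1 * K := by rw [hKTinv, one_mul]
    _ = (K⁻¹)ᵀ * (Kᵀ * Sympl1 * K) := by noncomm_ring
    _ = K.det • ((K⁻¹)ᵀ * Sympl1) := by rw [symp_conj_aux, Matrix.mul_smul]
  have hrw : Sympl1 * (K * J_B * K⁻¹)
      = K.det • ((K⁻¹)ᵀ * (Sympl1 * J_B) * K⁻¹) := by
    calc Sympl1 * (K * J_B * K⁻¹) = (Sympl1 * K) * J_B * K⁻¹ := by noncomm_ring
    _ = (K.det • ((K⁻¹)ᵀ * Sympl1)) * J_B * K⁻¹ := by rw [key]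
    _ = K.det • ((K⁻¹)ᵀ * (Sympl1 * J_B) * K⁻¹) := by
        rw [Matrix.smul_mul, Matrix.smul_mul]; noncomm_ring
  have hpsd : (Sympl1 * (K * J_B * K⁻¹)).PosSemidef := by
    rw [hrw]
    have : ((K⁻¹)ᴴ * (Sympl1 * J_B) * K⁻¹).PosSemidef :=
      hJB.2.2.conjTranspose_mul_mul_same K⁻¹
    simpa using psd_smul_aux hK.le this
  have hherm : Sympl1 * (K * J_B * K⁻¹) = -((K * J_B * K⁻¹)ᵀ * Sympl1) := by
    have h1 := hpsd.1
    unfold Matrix.IsHermitian at h1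
    have h2 : (Sympl1 * (K * J_B * K⁻¹))ᵀ = Sympl1 * (K * J_B * K⁻¹) := by
      simpa using h1
    calc Sympl1 * (K * J_B * K⁻¹) = (Sympl1 * (K * J_B * K⁻¹))ᵀ := h2.symm
    _ = (K * J_B * K⁻¹)ᵀ * Sympl1ᵀ := by rw [transpose_mul]
    _ = -((K * J_B * K⁻¹)ᵀ * Sympl1) := by
        have : Sympl1ᵀ = -Sympl1 := by
          ext i j; fin_cases i <;> fin_cases j <;> simp [Sympl1]
        rw [this, Matrix.mul_neg]
  refine ⟨⟨?_, hherm, hpsd⟩, ?_⟩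
  · calc (K * J_B * K⁻¹) * (K * J_B * K⁻¹)
        = K * J_B * (K⁻¹ * K) * J_B * K⁻¹ := by noncomm_ring
    _ = K * (J_B * J_B) * K⁻¹ := by rw [hKinv]; noncomm_ring
    _ = -1 := by rw [hJB.1]; simp [hKinv']
  · rw [mul_assoc (K * J_B), hKinv, mul_one, sub_self]
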